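/- Let X be a finite nonempty set, let Π and P be full-support probability distributions on X, and set α = max_{x∈X} P(x)/Π(x) and β = max_{x∈X} Π(x)/P(x). Then D_KL(P‖Π) + D_KL(Π‖P) ≤ (β/α)·(α − 1/β)²/4 + (α/β)·(β − 1/α)²/4 = (αβ − 1)²/(2αβ). -/

import Mathlib

open Finset

/-- Kullback–Leibler divergence between two (full-support) distributions on a finite set. -/
noncomputable def KLdiv {X : Type*} [Fintype X] (P Q : X → ℝ) : ℝ :=
  ∑ x, P x * Real.log (P x / Q x)

lemma two_log_le (u : ℝ) (hu : 1 ≤ u) : 2 * Real.log u ≤ u - 1/u := by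
  have hder : ∀ x : ℝ, 0 < x → HasDerivAt (fun x : ℝ => x - 1/x - 2 * Real.log x)
      (1 - (-(1/x^2)) - 2 * (1/x)) x := by
    intro x hx0
    have h1 : HasDerivAt (fun x : ℝ => 1/x) (-(1/x^2)) x := by
      simpa [one_div] using (hasDerivAt_inv (ne_of_gt hx0))
    have h2 : HasDerivAt Real.log (1/x) x := by
      simpa [one_div] using (Real.hasDerivAt_log (ne_of_gt hx0))
    exact ((hasDerivAt_id x).sub h1).sub (h2.const_mul 2)
  have key : MonotoneOn (fun x : ℝ => x - 1/x - 2 * Real.log x) (Set.Ici 1) := by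
    apply monotoneOn_of_deriv_nonneg (convex_Ici 1)
    · exact fun x hx => ((hder x (lt_of_lt_of_le one_pos hx)).continuousAt).continuousWithinAt
    · intro x hx
      rw [interior_Ici] at hx
      exact ((hder x (lt_trans one_pos hx)).differentiableAt).differentiableWithinAt
    · intro x hx
      rw [interior_Ici] at hx
      have hx0 : (0:ℝ) < x := lt_trans one_pos hx
      rw [(hder x hx0).deriv]
      have hexp : (1 - 1/x)^2 = 1 - -(1/x^2) - 2*(1/x) := by field_simp; ring
      have := sq_nonneg (1 - 1/x)
      linarith [hexp ▸ this]
  have := key (Set.self_mem_Ici) (show u ∈ Set.Ici 1 from hu) hu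
  simp only [Real.log_one] at this
  norm_num at this
  rw [one_div]
  linarith

lemma convexOn_f : ConvexOn ℝ (Set.Ioi (0:ℝ)) (fun r => (r - 1) * Real.log r) := by
  have h1 : ConvexOn ℝ (Set.Ioi (0:ℝ)) (fun r : ℝ => r * Real.log r) :=
    Real.convexOn_mul_log.subset (Set.Ioi_subset_Ici le_rfl) (convex_Ioi 0)
  have h2 : ConvexOn ℝ (Set.Ioi (0:ℝ)) (fun r : ℝ => -Real.log r) :=
    (strictConcaveOn_log_Ioi.concaveOn).neg
  have h3 := h1.add h2
  have e : (fun r : ℝ => (r - 1) * Real.log r)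
      = (fun r : ℝ => r * Real.log r) + (fun r : ℝ => -Real.log r) := by
    funext r
    simp only [Pi.add_apply]
    ring
  rw [e]; exact h3

lemma chord_le {f : ℝ → ℝ} (hf : ConvexOn ℝ (Set.Ioi (0:ℝ)) f) {A B x : ℝ}
    (hA : 0 < A) (hAB : A < B) (hx1 : A ≤ x) (hx2 : x ≤ B) :
    f x * (B - A) ≤ f A * (B - x) + f B * (x - A) := by
  have hBA : 0 < B - A := sub_pos.2 hAB
  have ht1 : 0 ≤ (B - x) / (B - A) := div_nonneg (sub_nonneg.2 hx2) hBA.le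
  have ht2 : 0 ≤ (x - A) / (B - A) := div_nonneg (sub_nonneg.2 hx1) hBA.le
  have hts : (B - x) / (B - A) + (x - A) / (B - A) = 1 := by field_simp; ring
  have hcomb : (B - x) / (B - A) * A + (x - A) / (B - A) * B = x := by
    field_simp; ring
  have h := hf.2 (Set.mem_Ioi.2 hA) (Set.mem_Ioi.2 (lt_trans hA hAB)) ht1 ht2 hts
  simp only [smul_eq_mul] at h
  rw [hcomb] at h
  calc f x * (B - A) ≤ ((B - x) / (B - A) * f A + (x - A) / (B - A) * f B) * (B - A) :=
        mul_le_mul_of_nonneg_right h hBA.le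
    _ = f A * (B - x) + f B * (x - A) := by field_simp

lemma am_gm' (a b : ℝ) (ha : 0 ≤ a) (hb : 0 ≤ b) : 2 * Real.sqrt (a * b) ≤ a + b := by
  rw [Real.sqrt_mul ha]
  nlinarith [sq_nonneg (Real.sqrt a - Real.sqrt b), Real.sq_sqrt ha, Real.sq_sqrt hb,
    Real.sqrt_nonneg a, Real.sqrt_nonneg b]

lemma key_poly (a b t : ℝ) (ha : 1 ≤ a) (hb : 1 ≤ b) (ht : 1 ≤ t) (h2 : t^2 = a*b)
    (ham : 2*t ≤ a+b) (h1 : 1 < a*b) :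
    (a - 1) * (b - 1) * (a*b - 1) * (2*(a*b)*b) ≤ (a*b - 1)^3 * (b*t) := by
  have h4 : (0:ℝ) < a*b - 1 := by linarith
  have ht0 : (0:ℝ) < t := by linarith
  have hb0 : (0:ℝ) < b := by linarith
  have hq : (a-1)*(b-1) ≤ (t-1)^2 := by nlinarith
  have h5 : 2*t*(t-1)^2 ≤ (t^2-1)^2 := by nlinarith [sq_nonneg (t-1), sq_nonneg t]
  have h6 : 2*t*((a-1)*(b-1))*(a*b-1) ≤ (a*b-1)^3 := by
    calc 2*t*((a-1)*(b-1))*(a*b-1) ≤ 2*t*((t-1)^2)*(a*b-1) := by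
          have := mul_le_mul_of_nonneg_right
            (mul_le_mul_of_nonneg_left hq (show (0:ℝ) ≤ 2*t by linarith)) h4.le
          linarith [this]
      _ ≤ (t^2-1)^2*(a*b-1) := by nlinarith
      _ = (a*b-1)^3 := by rw [h2]; ring
  have h7 := mul_le_mul_of_nonneg_right h6 (mul_nonneg hb0.le ht0.le)
  rw [← h2] at h7 ⊢
  linarith [h7]

/-- With `α = max_x P x / Pi x` and `β = max_x Pi x / P x`,
`D_KL(P‖Pi) + D_KL(Pi‖P) ≤ (β/α)(α - 1/β)²/4 + (α/β)(β - 1/α)²/4 = (αβ - 1)²/(2αβ)`. -/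
theorem symmetric_KL_upper_bound {X : Type*} [Fintype X] [Nonempty X]
    (Pi P : X → ℝ)
    (hPipos : ∀ x, 0 < Pi x) (hPisum : ∑ x, Pi x = 1)
    (hPpos : ∀ x, 0 < P x) (hPsum : ∑ x, P x = 1) :
    (KLdiv P Pi + KLdiv Pi P
      ≤ (univ.sup' univ_nonempty (fun x => Pi x / P x)
            / univ.sup' univ_nonempty (fun x => P x / Pi x))
          * (univ.sup' univ_nonempty (fun x => P x / Pi x)
              - 1 / univ.sup' univ_nonempty (fun x => Pi x / P x)) ^ 2 / 4
        + (univ.sup' univ_nonempty (fun x => P x / Pi x)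
            / univ.sup' univ_nonempty (fun x => Pi x / P x))
          * (univ.sup' univ_nonempty (fun x => Pi x / P x)
              - 1 / univ.sup' univ_nonempty (fun x => P x / Pi x)) ^ 2 / 4) ∧
    ((univ.sup' univ_nonempty (fun x => Pi x / P x)
          / univ.sup' univ_nonempty (fun x => P x / Pi x))
        * (univ.sup' univ_nonempty (fun x => P x / Pi x)
            - 1 / univ.sup' univ_nonempty (fun x => Pi x / P x)) ^ 2 / 4
      + (univ.sup' univ_nonempty (fun x => P x / Pi x)
          / univ.sup' univ_nonempty (fun x => Pi x / P x))
        * (univ.sup' univ_nonempty (fun x => Pi x / P x)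
            - 1 / univ.sup' univ_nonempty (fun x => P x / Pi x)) ^ 2 / 4
      = (univ.sup' univ_nonempty (fun x => P x / Pi x)
            * univ.sup' univ_nonempty (fun x => Pi x / P x) - 1) ^ 2
        / (2 * (univ.sup' univ_nonempty (fun x => P x / Pi x)
            * univ.sup' univ_nonempty (fun x => Pi x / P x)))) := by
  set α := univ.sup' univ_nonempty (fun x => P x / Pi x) with hαdef
  set β := univ.sup' univ_nonempty (fun x => Pi x / P x) with hβdef
  have hαx : ∀ x, P x / Pi x ≤ α := fun x => by
    rw [hαdef]; exact le_sup' (fun x => P x / Pi x) (mem_univ x)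
  have hβx : ∀ x, Pi x / P x ≤ β := fun x => by
    rw [hβdef]; exact le_sup' (fun x => Pi x / P x) (mem_univ x)
  -- 1 ≤ α
  have hex : ∃ x, Pi x ≤ P x := by
    by_contra h
    push_neg at h
    have := Finset.sum_lt_sum_of_nonempty univ_nonempty (fun x _ => h x)
    rw [hPsum, hPisum] at this
    exact lt_irrefl 1 this
  have hex' : ∃ x, P x ≤ Pi x := by
    by_contra h
    push_neg at h
    have := Finset.sum_lt_sum_of_nonempty univ_nonempty (fun x _ => h x)
    rw [hPsum, hPisum] at this
    exact lt_irrefl 1 this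
  have hα1 : 1 ≤ α := by
    obtain ⟨x, hx⟩ := hex
    exact le_trans ((one_le_div (hPipos x)).2 hx) (hαx x)
  have hβ1 : 1 ≤ β := by
    obtain ⟨x, hx⟩ := hex'
    exact le_trans ((one_le_div (hPpos x)).2 hx) (hβx x)
  have hα0 : (0:ℝ) < α := lt_of_lt_of_le one_pos hα1
  have hβ0 : (0:ℝ) < β := lt_of_lt_of_le one_pos hβ1
  have hrlb : ∀ x, 1/β ≤ P x / Pi x := by
    intro x
    have h1 : Pi x ≤ β * P x := (div_le_iff₀ (hPpos x)).1 (hβx x)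
    rw [div_le_div_iff₀ hβ0 (hPipos x)]
    linarith
  -- equality part (pure algebra)
  have heq : β / α * (α - 1/β)^2 / 4 + α / β * (β - 1/α)^2 / 4
      = (α * β - 1)^2 / (2 * (α * β)) := by
    field_simp
    ring
  refine ⟨?_, heq⟩
  rw [heq]
  -- rewrite the KL sum
  have key : KLdiv P Pi + KLdiv Pi P
      = ∑ x, Pi x * ((P x / Pi x - 1) * Real.log (P x / Pi x)) := by
    unfold KLdiv
    rw [← Finset.sum_add_distrib]
    apply Finset.sum_congr rfl
    intro x _
    have h1 : Real.log (Pi x / P x) = - Real.log (P x / Pi x) := by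
      rw [Real.log_div (ne_of_gt (hPipos x)) (ne_of_gt (hPpos x)),
        Real.log_div (ne_of_gt (hPpos x)) (ne_of_gt (hPipos x))]
      ring
    rw [h1]
    have hne : Pi x ≠ 0 := ne_of_gt (hPipos x)
    field_simp
    ring
  rw [key]
  by_cases hcase : α ≤ 1/β
  · -- degenerate case: α = β = 1, all ratios are 1
    have hβle : 1/β ≤ 1 := by
      rw [div_le_one hβ0]; exact hβ1
    have hα : α = 1 := le_antisymm (le_trans hcase hβle) hα1
    have hβinv : 1/β = 1 := le_antisymm hβle (by rw [hα] at hcase; exact hcase)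
    have htriv : ∀ x, P x / Pi x = 1 := fun x =>
      le_antisymm (by rw [← hα]; exact hαx x) (by rw [← hβinv]; exact hrlb x)
    have : ∑ x, Pi x * ((P x / Pi x - 1) * Real.log (P x / Pi x)) = 0 := by
      apply Finset.sum_eq_zero
      intro x _
      rw [htriv x]
      simp
    rw [this]
    positivity
  · push_neg at hcase
    set f : ℝ → ℝ := fun r => (r - 1) * Real.log r with hfdef
    have hba : (0:ℝ) < α - 1/β := sub_pos.2 hcase
    have ha0 : (0:ℝ) < 1/β := by positivity
    -- chord bound, summed
    have hsum1 : (∑ x, Pi x * ((P x / Pi x - 1) * Real.log (P x / Pi x))) * (α - 1/β)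
        ≤ f (1/β) * (α - 1) + f α * (1 - 1/β) := by
      have hpt : ∀ x, Pi x * ((P x / Pi x - 1) * Real.log (P x / Pi x)) * (α - 1/β)
          ≤ Pi x * (f (1/β) * (α - P x / Pi x) + f α * (P x / Pi x - 1/β)) := by
        intro x
        have := chord_le convexOn_f ha0 hcase (hrlb x) (hαx x)
        calc Pi x * ((P x / Pi x - 1) * Real.log (P x / Pi x)) * (α - 1/β)
            = Pi x * (f (P x / Pi x) * (α - 1/β)) := by rw [hfdef]; ring
          _ ≤ Pi x * (f (1/β) * (α - P x / Pi x) + f α * (P x / Pi x - 1/β)) :=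
              mul_le_mul_of_nonneg_left this (hPipos x).le
      calc (∑ x, Pi x * ((P x / Pi x - 1) * Real.log (P x / Pi x))) * (α - 1/β)
          = ∑ x, Pi x * ((P x / Pi x - 1) * Real.log (P x / Pi x)) * (α - 1/β) := by
            rw [Finset.sum_mul]
        _ ≤ ∑ x, Pi x * (f (1/β) * (α - P x / Pi x) + f α * (P x / Pi x - 1/β)) :=
            Finset.sum_le_sum (fun x _ => hpt x)
        _ = ∑ x, (f (1/β) * (α * Pi x - P x) + f α * (P x - 1/β * Pi x)) := by
            apply Finset.sum_congr rfl
            intro x _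
            have hne : Pi x ≠ 0 := ne_of_gt (hPipos x)
            field_simp
        _ = f (1/β) * (α - 1) + f α * (1 - 1/β) := by
            rw [Finset.sum_add_distrib, ← Finset.mul_sum, ← Finset.mul_sum,
              Finset.sum_sub_distrib, Finset.sum_sub_distrib, ← Finset.mul_sum,
              ← Finset.mul_sum, hPsum, hPisum]
            ring
    -- evaluate f at endpoints
    have hf1β : f (1/β) = (1/β - 1) * (- Real.log β) := by
      rw [hfdef]
      simp only [one_div, Real.log_inv]
    have hN : f (1/β) * (α - 1) + f α * (1 - 1/β)
        = (α - 1) * (1 - 1/β) * Real.log (α * β) := by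
      rw [hf1β, hfdef, Real.log_mul (ne_of_gt hα0) (ne_of_gt hβ0)]
      ring
    -- the analytic bound
    set s := Real.sqrt (α * β) with hsdef
    have hαβ1 : 1 < α * β := by
      have := mul_lt_mul_of_pos_right hcase hβ0
      rwa [one_div, inv_mul_cancel₀ (ne_of_gt hβ0)] at this
    have hs1 : 1 ≤ s := Real.one_le_sqrt.2 hαβ1.le
    have hs0 : (0:ℝ) < s := lt_of_lt_of_le one_pos hs1
    have hs2 : s^2 = α * β := Real.sq_sqrt (by positivity)
    have hlog : Real.log (α * β) ≤ (α * β - 1) / s := by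
      have h2 := two_log_le s hs1
      have : Real.log (α * β) = 2 * Real.log s := by
        rw [← hs2, Real.log_pow]
        push_cast
        ring
      rw [this]
      calc 2 * Real.log s ≤ s - 1/s := h2
        _ = (α * β - 1) / s := by rw [← hs2]; field_simp
    have ham : 2 * s ≤ α + β := by
      rw [hsdef]; exact am_gm' α β hα0.le hβ0.le
    have hP := key_poly α β s hα1 hβ1 hs1 hs2 ham hαβ1
    have hfinal : (α - 1) * (1 - 1/β) * Real.log (α * β)
        ≤ (α * β - 1)^2 / (2 * (α * β)) * (α - 1/β) := by
      have hcoef : (0:ℝ) ≤ (α - 1) * (1 - 1/β) := by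
        apply mul_nonneg (by linarith)
        have : 1/β ≤ 1 := by rw [div_le_one hβ0]; exact hβ1
        linarith
      calc (α - 1) * (1 - 1/β) * Real.log (α * β)
          ≤ (α - 1) * (1 - 1/β) * ((α * β - 1)/s) := mul_le_mul_of_nonneg_left hlog hcoef
        _ ≤ (α * β - 1)^2 / (2 * (α * β)) * (α - 1/β) := by
            have e1 : (α - 1) * (1 - 1/β) * ((α*β - 1)/s)
                = ((α - 1) * (β - 1) * (α*β - 1)) / (β * s) := by
              field_simp
              try ring
            have e2 : (α*β - 1)^2 / (2*(α*β)) * (α - 1/β)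
                = ((α*β - 1)^3) / (2*(α*β)*β) := by
              have hab : α - 1/β = (α*β - 1)/β := by
                field_simp
                try ring
              rw [hab]; field_simp
            rw [e1, e2, div_le_div_iff₀ (by positivity) (by positivity)]
            linarith [hP]
    have hchain : (∑ x, Pi x * ((P x / Pi x - 1) * Real.log (P x / Pi x))) * (α - 1/β)
        ≤ (α * β - 1)^2 / (2 * (α * β)) * (α - 1/β) := by
      calc (∑ x, Pi x * ((P x / Pi x - 1) * Real.log (P x / Pi x))) * (α - 1/β)
          ≤ f (1/β) * (α - 1) + f α * (1 - 1/β) := hsum1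
        _ = (α - 1) * (1 - 1/β) * Real.log (α * β) := hN
        _ ≤ (α * β - 1)^2 / (2 * (α * β)) * (α - 1/β) := hfinal
    exact le_of_mul_le_mul_right hchain hba
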